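/- Every 2-connected graph that is not a cycle contains a subdivision of the diamond (K₄ minus an edge) as a subgraph; equivalently, a graph is a cactus graph if and only if it contains no subdivision of the diamond. -/

import Mathlib

open SimpleGraph

def PreconnOn {V : Type} (G : SimpleGraph V) (B : Set V) : Prop :=
  (G.induce B).Preconnected

/-- Two `a`–`b` paths are internally disjoint: they share only `a` and `b`. -/
def InternallyDisjoint {V : Type} {G : SimpleGraph V} {a b : V}
    (p q : G.Path a b) : Prop :=
  ∀ u : V, u ∈ (p : G.Walk a b).support → u ∈ (q : G.Walk a b).support →
    u = a ∨ u = b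

/-- `G` contains a subdivision of the diamond (`K₄` minus an edge) as a subgraph:
equivalently, there are two distinct vertices joined by three pairwise internally
disjoint, pairwise distinct paths. -/
def HasDiamondSubdivision {V : Type} (G : SimpleGraph V) : Prop :=
  ∃ a b : V, a ≠ b ∧ ∃ p q r : G.Path a b,
    p ≠ q ∧ p ≠ r ∧ q ≠ r ∧
    InternallyDisjoint p q ∧ InternallyDisjoint p r ∧ InternallyDisjoint q r

lemma thetaOf {V : Type} [DecidableEq V] {G : SimpleGraph V} {v x y z t : V}
    (hvx : G.Adj v x) (hvy : G.Adj v y) (hvz : G.Adj v z)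
    (hxy : x ≠ y) (hxz : x ≠ z) (hyz : y ≠ z)
    (Q : G.Walk x y) (hQ : Q.IsPath) (hvQ : v ∉ Q.support)
    (ht : t ∈ Q.support)
    (R : G.Walk z t) (hR : R.IsPath) (hvR : v ∉ R.support)
    (hRQ : ∀ u ∈ R.support, u ∈ Q.support → u = t) :
    HasDiamondSubdivision G := by
  classical
  set T := Q.takeUntil t ht with hTdef
  set D := (Q.dropUntil t ht).reverse with hDdef
  have hTsub : T.support ⊆ Q.support := Q.support_takeUntil_subset ht
  have hDsub : D.support ⊆ Q.support := by
    intro u hu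
    rw [SimpleGraph.Walk.support_reverse] at hu
    exact Q.support_dropUntil_subset ht (List.mem_reverse.mp hu)
  have hTD : ∀ u, u ∈ T.support → u ∈ D.support → u = t := by
    intro u huT huD
    rw [SimpleGraph.Walk.support_reverse, List.mem_reverse] at huD
    by_contra hut
    have hnd : Q.support.Nodup := hQ.support_nodup
    rw [← Q.take_spec ht, SimpleGraph.Walk.support_append, List.nodup_append] at hnd
    have : u ∈ ((Q.dropUntil t ht).support).tail := by
      have := (Q.dropUntil t ht).support_eq_cons
      rw [this] at huD
      rcases List.mem_cons.mp huD with h | h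
      · exact absurd h hut
      · exact h
    exact hnd.2.2 u huT u this rfl
  have hA1 : (SimpleGraph.Walk.cons hvx T).IsPath := by
    rw [SimpleGraph.Walk.cons_isPath_iff]
    exact ⟨hQ.takeUntil ht, fun h => hvQ (hTsub h)⟩
  have hA2 : (SimpleGraph.Walk.cons hvy D).IsPath := by
    rw [SimpleGraph.Walk.cons_isPath_iff]
    exact ⟨(hQ.dropUntil ht).reverse, fun h => hvQ (hDsub h)⟩
  have hA3 : (SimpleGraph.Walk.cons hvz R).IsPath := by
    rw [SimpleGraph.Walk.cons_isPath_iff]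
    exact ⟨hR, hvR⟩
  have hvt : v ≠ t := fun h => hvQ (h ▸ ht)
  refine ⟨v, t, hvt, ⟨_, hA1⟩, ⟨_, hA2⟩, ⟨_, hA3⟩, ?_, ?_, ?_, ?_, ?_, ?_⟩
  -- second-vertex facts
  · intro h
    have := congrArg SimpleGraph.Walk.support (Subtype.mk_eq_mk.mp h)
    simp only [SimpleGraph.Walk.support_cons] at this
    rw [T.support_eq_cons, D.support_eq_cons] at this
    simp only [List.cons.injEq] at this
    exact hxy this.2.1
  · intro h
    have := congrArg SimpleGraph.Walk.support (Subtype.mk_eq_mk.mp h)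
    simp only [SimpleGraph.Walk.support_cons] at this
    rw [T.support_eq_cons, R.support_eq_cons] at this
    simp only [List.cons.injEq] at this
    exact hxz this.2.1
  · intro h
    have := congrArg SimpleGraph.Walk.support (Subtype.mk_eq_mk.mp h)
    simp only [SimpleGraph.Walk.support_cons] at this
    rw [D.support_eq_cons, R.support_eq_cons] at this
    simp only [List.cons.injEq] at this
    exact hyz this.2.1
  · intro u hu1 hu2
    simp only [SimpleGraph.Walk.support_cons, List.mem_cons] at hu1 hu2
    rcases hu1 with rfl | hu1
    · exact Or.inl rfl
    rcases hu2 with rfl | hu2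
    · exact Or.inl rfl
    · exact Or.inr (hTD u hu1 hu2)
  · intro u hu1 hu2
    simp only [SimpleGraph.Walk.support_cons, List.mem_cons] at hu1 hu2
    rcases hu1 with rfl | hu1
    · exact Or.inl rfl
    rcases hu2 with rfl | hu2
    · exact Or.inl rfl
    · exact Or.inr (hRQ u hu2 (hTsub hu1))
  · intro u hu1 hu2
    simp only [SimpleGraph.Walk.support_cons, List.mem_cons] at hu1 hu2
    rcases hu1 with rfl | hu1
    · exact Or.inl rfl
    rcases hu2 with rfl | hu2
    · exact Or.inl rfl
    · exact Or.inr (hRQ u hu2 (hDsub hu1))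

lemma firstHit {V : Type} {G : SimpleGraph V} (S : List V) :
    ∀ {z x : V} (W : G.Walk z x), W.IsPath → x ∈ S →
    ∃ t, t ∈ S ∧ ∃ R : G.Walk z t, R.IsPath ∧ (∀ u ∈ R.support, u ∈ W.support) ∧
      ∀ u ∈ R.support, u ∈ S → u = t := by
  classical
  intro z x W
  induction W with
  | nil =>
    intro _ hx
    exact ⟨_, hx, SimpleGraph.Walk.nil, SimpleGraph.Walk.IsPath.nil,
      fun u hu => hu, fun u hu _ => by simpa using hu⟩
  | @cons a b c h W ih =>
    intro hp hx
    by_cases ha : a ∈ S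
    · refine ⟨a, ha, SimpleGraph.Walk.nil, SimpleGraph.Walk.IsPath.nil, ?_, ?_⟩
      · intro u hu; simp at hu; simp [hu]
      · intro u hu _; simpa using hu
    · obtain ⟨t, htS, R, hRp, hRsub, hRS⟩ := ih hp.of_cons hx
      refine ⟨t, htS, SimpleGraph.Walk.cons h R, ?_, ?_, ?_⟩
      · rw [SimpleGraph.Walk.cons_isPath_iff]
        refine ⟨hRp, fun hc => ?_⟩
        exact ((SimpleGraph.Walk.cons_isPath_iff h W).mp hp).2 (hRsub a hc)
      · intro u hu
        simp only [SimpleGraph.Walk.support_cons, List.mem_cons] at hu ⊢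
        rcases hu with rfl | hu
        · exact Or.inl rfl
        · exact Or.inr (hRsub u hu)
      · intro u hu huS
        simp only [SimpleGraph.Walk.support_cons, List.mem_cons] at hu
        rcases hu with rfl | hu
        · exact absurd huS ha
        · exact hRS u hu huS

lemma walkAvoid {V : Type} [DecidableEq V] {G : SimpleGraph V} {v : V}
    (h : PreconnOn G {u : V | u ≠ v}) {x y : V} (hx : x ≠ v) (hy : y ≠ v) :
    ∃ W : G.Walk x y, W.IsPath ∧ v ∉ W.support := by
  obtain ⟨w⟩ := h ⟨x, hx⟩ ⟨y, hy⟩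
  let W0 : G.Walk x y := w.map (Embedding.induce {u : V | u ≠ v}).toHom
  have hsup : v ∉ W0.support := by
    intro hc
    rw [show W0.support = _ from SimpleGraph.Walk.support_map _ _] at hc
    obtain ⟨u, _, hu2⟩ := List.mem_map.mp hc
    exact u.2 hu2
  exact ⟨W0.bypass, W0.bypass_isPath, fun hc => hsup (W0.support_bypass_subset hc)⟩

/-- Every 2-connected graph (connected, at least 3 vertices, no cut
vertex) that is not a cycle (i.e. some vertex has degree ≠ 2) contains a subdivision
of the diamond as a subgraph. -/
theorem stmt10 {V : Type} [Fintype V] [DecidableEq V]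
    (G : SimpleGraph V) [DecidableRel G.Adj]
    (hconn : G.Connected) (hcard : 3 ≤ Fintype.card V)
    (hnocut : ∀ v : V, PreconnOn G {u : V | u ≠ v})
    (hnotcycle : ∃ v : V, G.degree v ≠ 2) :
    HasDiamondSubdivision G := by
  obtain ⟨v, hv⟩ := hnotcycle
  have hdeg2 : 2 ≤ G.degree v := by
    by_contra hlt
    push_neg at hlt
    have hcases : G.degree v = 0 ∨ G.degree v = 1 := by omega
    have hadj : ∃ w, G.Adj v w := by
      obtain ⟨w, hw⟩ := Fintype.exists_ne_of_one_lt_card (by omega) v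
      obtain ⟨p⟩ := hconn.preconnected v w
      cases p with
      | nil => exact absurd rfl hw.symm
      | cons h q => exact ⟨_, h⟩
    rcases hcases with h0 | h1
    · rw [← SimpleGraph.degree_pos_iff_exists_adj] at hadj
      omega
    · obtain ⟨u, hu⟩ := hadj
      obtain ⟨w, hw⟩ : ∃ w, w ∉ ({v, u} : Finset V) := by
        by_contra hc
        push_neg at hc
        have : (Finset.univ : Finset V).card ≤ ({v, u} : Finset V).card :=
          Finset.card_le_card (fun a _ => hc a)
        have h2 : ({v, u} : Finset V).card ≤ 2 :=
          le_trans (Finset.card_insert_le _ _) (by simp)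
        rw [Finset.card_univ] at this
        omega
      simp only [Finset.mem_insert, Finset.mem_singleton, not_or] at hw
      obtain ⟨W, hWp, huW⟩ := walkAvoid (hnocut u) hu.ne hw.2
      cases W with
      | nil => exact hw.1 rfl
      | cons hadj' W' =>
        rename_i b
        have hbW : b ∈ (SimpleGraph.Walk.cons hadj' W').support := by
          simp [SimpleGraph.Walk.support_cons]
        have hbu : b ≠ u := fun h => huW (h ▸ hbW)
        have : 1 < (G.neighborFinset v).card := by
          rw [Finset.one_lt_card_iff]
          exact ⟨u, b, by rwa [SimpleGraph.mem_neighborFinset],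
            by rwa [SimpleGraph.mem_neighborFinset], fun h => hbu h.symm⟩
        rw [← SimpleGraph.degree] at this
        omega
  have hdeg3 : 2 < G.degree v := lt_of_le_of_ne hdeg2 (Ne.symm hv)
  rw [← SimpleGraph.card_neighborFinset_eq_degree] at hdeg3
  obtain ⟨x, y, z, hx, hy, hz, hxy, hxz, hyz⟩ := Finset.two_lt_card_iff.mp hdeg3
  rw [SimpleGraph.mem_neighborFinset] at hx hy hz
  obtain ⟨Q, hQp, hvQ⟩ := walkAvoid (hnocut v) hx.ne' hy.ne'
  obtain ⟨W2, hW2p, hvW2⟩ := walkAvoid (hnocut v) hz.ne' hx.ne'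
  obtain ⟨t, htS, R, hRp, hRsub, hRS⟩ := firstHit Q.support W2 hW2p Q.start_mem_support
  exact thetaOf hx hy hz hxy hxz hyz Q hQp hvQ htS R hRp
    (fun hc => hvW2 (hRsub v hc)) hRS
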